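/- Suppose X_1, ..., X_n is a sequence of Bernoulli random variables where the conditional probability of success of X_i given any outcome of X_1, ..., X_{i−1} is at least η > 0. Let Y_1, ..., Y_n be independent Bernoulli trials each with success probability η. Then for any integer b, P(∑_{i=1}^n X_i ≤ b) ≤ P(∑_{i=1}^n Y_i ≤ b). -/

import Mathlib

open MeasureTheory ProbabilityTheory Finset
open scoped ENNReal

namespace Stmt11Aux

variable {Ω : Type*} [MeasurableSpace Ω]

/-- masked history pattern: first `m` values of `Z`, `false` afterwards. -/
def pat {n : ℕ} (Z : Fin n → Ω → Bool) (m : ℕ) (ω : Ω) : Fin n → Bool :=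
  fun j => if j.val < m then Z j ω else false

def cnt {n : ℕ} (x : Fin n → Bool) : ℕ := (Finset.univ.filter fun j => x j = true).card

def Eset {n : ℕ} (Z : Fin n → Ω → Bool) (m : ℕ) (b : ℤ) : Set Ω :=
  pat Z m ⁻¹' {x | (cnt x : ℤ) ≤ b}

def Fset {n : ℕ} (Z : Fin n → Ω → Bool) (m : ℕ) (b : ℤ) : Set Ω :=
  pat Z m ⁻¹' {x | (cnt x : ℤ) = b}

lemma measurableSet_bool_pi {n : ℕ} (Q : Set (Fin n → Bool)) : MeasurableSet Q := by
  have h1 : ∀ x : Fin n → Bool, MeasurableSet ({x} : Set (Fin n → Bool)) := by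
    intro x
    have : ({x} : Set (Fin n → Bool)) = ⋂ j, (fun f : Fin n → Bool => f j) ⁻¹' {x j} := by
      ext y; simp [funext_iff]
    rw [this]
    exact MeasurableSet.iInter fun j => (measurable_pi_apply j) (measurableSet_singleton _)
  have : Q = ⋃ x ∈ Q, ({x} : Set (Fin n → Bool)) := by simp
  rw [this]
  exact MeasurableSet.biUnion (Set.to_countable Q) fun x _ => h1 x

lemma measurable_pat {n : ℕ} (Z : Fin n → Ω → Bool) (hZ : ∀ i, Measurable (Z i)) (m : ℕ) :
    Measurable (pat Z m) := by
  apply measurable_pi_lambda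
  intro j
  by_cases h : j.val < m
  · simpa [pat, h] using hZ j
  · simpa [pat, h] using measurable_const

lemma measurableSet_cylpre {n : ℕ} (Z : Fin n → Ω → Bool) (hZ : ∀ i, Measurable (Z i))
    (m : ℕ) (Q : Set (Fin n → Bool)) : MeasurableSet (pat Z m ⁻¹' Q) :=
  measurable_pat Z hZ m (measurableSet_bool_pi Q)

lemma measurableSet_val {n : ℕ} (Z : Fin n → Ω → Bool) (hZ : ∀ i, Measurable (Z i))
    (i : Fin n) (v : Bool) : MeasurableSet {ω | Z i ω = v} :=
  hZ i (measurableSet_singleton v)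

/-- cylinder equals a pattern preimage of a singleton, for masked `x`. -/
lemma cyl_eq {n : ℕ} (Z : Fin n → Ω → Bool) (i : Fin n) (x : Fin n → Bool)
    (hx : ∀ j : Fin n, ¬ j.val < i.val → x j = false) :
    {ω | ∀ j < i, Z j ω = x j} = pat Z i.val ⁻¹' {x} := by
  ext ω
  simp only [Set.mem_setOf_eq, Set.mem_preimage, Set.mem_singleton_iff, funext_iff, pat]
  constructor
  · intro h j
    by_cases hj : j.val < i.val
    · simpa [hj] using h j hj
    · simp [hj, hx j hj]
  · intro h j hj
    have := h j
    simpa [show j.val < i.val from hj] using this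

/-- Key cylinder bound: a per-cylinder lower bound transfers to any event
depending only on the history before `i`. -/
lemma cyl_bound {n : ℕ} (μ : Measure Ω) [IsProbabilityMeasure μ]
    (Z : Fin n → Ω → Bool) (hZ : ∀ i, Measurable (Z i)) (i : Fin n) (v : Bool) (c : ℝ≥0∞)
    (h : ∀ x : Fin n → Bool, (∀ j : Fin n, ¬ j.val < i.val → x j = false) →
      c * μ {ω | ∀ j < i, Z j ω = x j} ≤ μ ({ω | ∀ j < i, Z j ω = x j} ∩ {ω | Z i ω = v}))
    (Q : Set (Fin n → Bool)) :
    c * μ (pat Z i.val ⁻¹' Q) ≤ μ (pat Z i.val ⁻¹' Q ∩ {ω | Z i ω = v}) := by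
  classical
  set T : Finset (Fin n → Bool) :=
    univ.filter (fun x => x ∈ Q ∧ ∀ j : Fin n, ¬ j.val < i.val → x j = false) with hT
  have hmasked : ∀ ω, ∀ j : Fin n, ¬ j.val < i.val → pat Z i.val ω j = false := by
    intro ω j hj; simp [pat, hj]
  have hQT : pat Z i.val ⁻¹' Q = pat Z i.val ⁻¹' (T : Set (Fin n → Bool)) := by
    ext ω
    simp only [Set.mem_preimage, hT, coe_filter, Set.mem_setOf_eq, mem_univ, true_and,
      mem_coe, mem_filter]
    exact ⟨fun hq => ⟨hq, hmasked ω⟩, fun hq => hq.1⟩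
  have hUnion : pat Z i.val ⁻¹' (T : Set (Fin n → Bool)) = ⋃ x ∈ T, pat Z i.val ⁻¹' {x} := by
    rw [← Set.preimage_iUnion₂]; congr 1; ext; simp
  have hdisj : (T : Set (Fin n → Bool)).PairwiseDisjoint
      (fun x => pat Z i.val ⁻¹' {x} ∩ {ω | Z i ω = v}) := by
    intro x hx y hy hxy
    refine Set.disjoint_left.mpr ?_
    rintro ω ⟨hx1, -⟩ ⟨hy1, -⟩
    exact hxy (hx1.symm.trans hy1)
  have hdisj' : (T : Set (Fin n → Bool)).PairwiseDisjoint
      (fun x => pat Z i.val ⁻¹' ({x} : Set (Fin n → Bool))) := by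
    intro x hx y hy hxy
    refine Set.disjoint_left.mpr ?_
    rintro ω hx1 hy1
    exact hxy (hx1.symm.trans hy1)
  have hmeas1 : ∀ x : Fin n → Bool, MeasurableSet (pat Z i.val ⁻¹' ({x} : Set (Fin n → Bool))) :=
    fun x => measurableSet_cylpre Z hZ i.val {x}
  have hsum1 : μ (pat Z i.val ⁻¹' Q) = ∑ x ∈ T, μ (pat Z i.val ⁻¹' {x}) := by
    rw [hQT, hUnion]
    exact measure_biUnion_finset hdisj' fun x _ => hmeas1 x
  have hsum2 : μ (pat Z i.val ⁻¹' Q ∩ {ω | Z i ω = v})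
      = ∑ x ∈ T, μ (pat Z i.val ⁻¹' {x} ∩ {ω | Z i ω = v}) := by
    rw [hQT, hUnion, Set.iUnion₂_inter]
    exact measure_biUnion_finset hdisj fun x _ =>
      (hmeas1 x).inter (measurableSet_val Z hZ i v)
  rw [hsum1, hsum2, Finset.mul_sum]
  refine Finset.sum_le_sum fun x hx => ?_
  have hxm : ∀ j : Fin n, ¬ j.val < i.val → x j = false := by
    simp only [hT, mem_filter] at hx; exact hx.2.2
  have := h x hxm
  rwa [cyl_eq Z i x hxm] at this

lemma cnt_pat_zero {n : ℕ} (Z : Fin n → Ω → Bool) (ω : Ω) : cnt (pat Z 0 ω) = 0 := by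
  simp [cnt, pat]

lemma Eset_zero {n : ℕ} (Z : Fin n → Ω → Bool) (b : ℤ) :
    Eset Z 0 b = {ω : Ω | (0 : ℤ) ≤ b} := by
  ext ω; simp [Eset, cnt_pat_zero]

lemma cnt_pat_succ {n : ℕ} (Z : Fin n → Ω → Bool) (i : Fin n) (ω : Ω) :
    cnt (pat Z (i.val + 1) ω) = cnt (pat Z i.val ω) + (if Z i ω = true then 1 else 0) := by
  classical
  have hiff : ∀ (m : ℕ) (j : Fin n), (pat Z m ω j = true) ↔ (j.val < m ∧ Z j ω = true) := by
    intro m j; unfold pat; split <;> simp_all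
  have h1 : (univ.filter fun j : Fin n => pat Z (i.val + 1) ω j = true)
      = (univ.filter fun j : Fin n => pat Z i.val ω j = true)
        ∪ (univ.filter fun j : Fin n => j = i ∧ Z j ω = true) := by
    rw [← Finset.filter_or]
    apply Finset.filter_congr
    intro j _
    simp only [hiff]
    constructor
    · rintro ⟨hlt, hz⟩
      rcases Nat.lt_succ_iff_lt_or_eq.mp hlt with h | h
      · exact Or.inl ⟨h, hz⟩
      · exact Or.inr ⟨Fin.ext h, hz⟩
    · rintro (⟨h, hz⟩ | ⟨rfl, hz⟩)
      · exact ⟨Nat.lt_succ_of_lt h, hz⟩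
      · exact ⟨Nat.lt_succ_self _, hz⟩
  have hdisj : Disjoint (univ.filter fun j : Fin n => pat Z i.val ω j = true)
      (univ.filter fun j : Fin n => j = i ∧ Z j ω = true) := by
    rw [Finset.disjoint_left]
    intro j hj1 hj2
    rw [mem_filter, hiff] at hj1
    rw [mem_filter] at hj2
    rcases hj2.2 with ⟨rfl, -⟩
    exact lt_irrefl _ hj1.2.1
  have h2 : (univ.filter fun j : Fin n => j = i ∧ Z j ω = true)
      = if Z i ω = true then {i} else ∅ := by
    split_ifs with hz
    · ext j; simp only [mem_filter, mem_univ, true_and, mem_singleton]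
      exact ⟨fun h => h.1, fun h => ⟨h, h ▸ hz⟩⟩
    · ext j; simp only [mem_filter, mem_univ, true_and, notMem_empty, iff_false]
      rintro ⟨rfl, h⟩; exact hz h
  unfold cnt
  rw [h1, Finset.card_union_of_disjoint hdisj, h2]
  split_ifs <;> simp

lemma Eset_succ {n : ℕ} (Z : Fin n → Ω → Bool) (i : Fin n) (b : ℤ) :
    Eset Z (i.val + 1) b
      = Eset Z i.val (b - 1) ∪ (Fset Z i.val b ∩ {ω | Z i ω = false}) := by
  ext ω
  simp only [Eset, Fset, Set.mem_preimage, Set.mem_setOf_eq, Set.mem_union, Set.mem_inter_iff,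
    cnt_pat_succ]
  cases hz : Z i ω <;> simp [hz] <;> omega

lemma Eset_succ_disj {n : ℕ} (Z : Fin n → Ω → Bool) (i : Fin n) (b : ℤ) :
    Disjoint (Eset Z i.val (b - 1)) (Fset Z i.val b ∩ {ω | Z i ω = false}) := by
  refine Set.disjoint_left.mpr ?_
  rintro ω h1 ⟨h2, -⟩
  simp only [Eset, Fset, Set.mem_preimage, Set.mem_setOf_eq] at h1 h2
  omega

lemma Eset_split {n : ℕ} (Z : Fin n → Ω → Bool) (m : ℕ) (b : ℤ) :
    Eset Z m b = Eset Z m (b - 1) ∪ Fset Z m b := by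
  ext ω
  simp only [Eset, Fset, Set.mem_preimage, Set.mem_setOf_eq, Set.mem_union]
  omega

lemma Eset_split_disj {n : ℕ} (Z : Fin n → Ω → Bool) (m : ℕ) (b : ℤ) :
    Disjoint (Eset Z m (b - 1)) (Fset Z m b) := by
  refine Set.disjoint_left.mpr ?_
  intro ω h1 h2
  simp only [Eset, Fset, Set.mem_preimage, Set.mem_setOf_eq] at h1 h2
  omega

lemma measure_Eset_split {n : ℕ} (μ : Measure Ω) (Z : Fin n → Ω → Bool)
    (hZ : ∀ i, Measurable (Z i)) (m : ℕ) (b : ℤ) :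
    μ (Eset Z m b) = μ (Eset Z m (b - 1)) + μ (Fset Z m b) := by
  rw [Eset_split Z m b]
  exact measure_union (Eset_split_disj Z m b) (measurableSet_cylpre Z hZ m _)

/-- μ-side step inequality. -/
lemma mu_step {n : ℕ} (μ : Measure Ω) [IsProbabilityMeasure μ] (η : ℝ≥0∞) (hη1 : η ≤ 1)
    (Z : Fin n → Ω → Bool) (hZ : ∀ i, Measurable (Z i))
    (hcond : ∀ (i : Fin n) (x : Fin n → Bool),
      0 < μ {ω | ∀ j < i, Z j ω = x j} →
      η * μ {ω | ∀ j < i, Z j ω = x j} ≤ μ {ω | Z i ω = true ∧ ∀ j < i, Z j ω = x j})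
    (i : Fin n) (b : ℤ) :
    μ (Eset Z (i.val + 1) b)
      ≤ η * μ (Eset Z i.val (b - 1)) + (1 - η) * μ (Eset Z i.val b) := by
  classical
  set v := μ (Eset Z i.val (b - 1)) with hv
  set f := μ (Fset Z i.val b) with hf
  -- per-cylinder bound
  have hpc : ∀ x : Fin n → Bool, (∀ j : Fin n, ¬ j.val < i.val → x j = false) →
      η * μ {ω | ∀ j < i, Z j ω = x j}
        ≤ μ ({ω | ∀ j < i, Z j ω = x j} ∩ {ω | Z i ω = true}) := by
    intro x _
    rcases (zero_le : (0 : ℝ≥0∞) ≤ μ {ω | ∀ j < i, Z j ω = x j}).lt_or_eq with hpos | hzero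
    · have := hcond i x hpos
      have hseteq : {ω | Z i ω = true ∧ ∀ j < i, Z j ω = x j}
          = {ω | ∀ j < i, Z j ω = x j} ∩ {ω | Z i ω = true} := by
        ext ω; simp [Set.mem_inter_iff, and_comm]
      rwa [hseteq] at this
    · rw [← hzero, mul_zero]; exact zero_le
  have key := cyl_bound μ Z hZ i true η hpc {x | (cnt x : ℤ) = b}
  -- key : η * μ (Fset ...) ≤ μ (Fset ... ∩ {Z i = true})
  have hFmeas : MeasurableSet (Fset Z i.val b) := measurableSet_cylpre Z hZ i.val _
  have hsplitF : μ (Fset Z i.val b ∩ {ω | Z i ω = false})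
      + μ (Fset Z i.val b ∩ {ω | Z i ω = true}) = f := by
    rw [← measure_union ?_ (hFmeas.inter (measurableSet_val Z hZ i true))]
    · congr 1
      ext ω
      simp only [Set.mem_union, Set.mem_inter_iff, Set.mem_setOf_eq]
      cases hz : Z i ω <;> simp [hz, Fset]
    · refine Set.disjoint_left.mpr ?_
      rintro ω ⟨-, h1⟩ ⟨-, h2⟩
      simp only [Set.mem_setOf_eq] at h1 h2
      rw [h1] at h2; exact Bool.false_ne_true h2
  have hfin : f ≠ ∞ := (measure_lt_top μ _).ne
  have hcfin : μ (Fset Z i.val b ∩ {ω | Z i ω = true}) ≠ ∞ := (measure_lt_top μ _).ne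
  have hb0 : μ (Fset Z i.val b ∩ {ω | Z i ω = false}) ≤ (1 - η) * f := by
    have h1 : μ (Fset Z i.val b ∩ {ω | Z i ω = false})
        = f - μ (Fset Z i.val b ∩ {ω | Z i ω = true}) :=
      ENNReal.eq_sub_of_add_eq hcfin hsplitF
    rw [h1]
    calc f - μ (Fset Z i.val b ∩ {ω | Z i ω = true}) ≤ f - η * f :=
          tsub_le_tsub_left key f
      _ = (1 - η) * f := by
          rw [ENNReal.sub_mul (fun _ _ => hfin), one_mul]
  have hE : μ (Eset Z (i.val + 1) b) = v + μ (Fset Z i.val b ∩ {ω | Z i ω = false}) := by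
    rw [Eset_succ Z i b]
    exact measure_union (Eset_succ_disj Z i b)
      (hFmeas.inter (measurableSet_val Z hZ i false))
  have hEb : μ (Eset Z i.val b) = v + f := measure_Eset_split μ Z hZ i.val b
  rw [hE, hEb]
  calc v + μ (Fset Z i.val b ∩ {ω | Z i ω = false}) ≤ v + (1 - η) * f :=
        add_le_add_right hb0 v
    _ = η * v + (1 - η) * (v + f) := by
        rw [mul_add, ← add_assoc]
        congr 1
        rw [← add_mul, add_comm η, tsub_add_cancel_of_le hη1, one_mul]

/-- ν-side step inequality (independence side). -/
lemma nu_step {n : ℕ} (ν : Measure Ω) [IsProbabilityMeasure ν] (η : ℝ≥0∞) (hη1 : η ≤ 1)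
    (Y : Fin n → Ω → Bool) (hY : ∀ i, Measurable (Y i))
    (hindep : iIndepFun Y ν)
    (hbern : ∀ i, ν {ω | Y i ω = true} = η)
    (i : Fin n) (b : ℤ) :
    η * ν (Eset Y i.val (b - 1)) + (1 - η) * ν (Eset Y i.val b)
      ≤ ν (Eset Y (i.val + 1) b) := by
  classical
  set v := ν (Eset Y i.val (b - 1)) with hv
  set f := ν (Fset Y i.val b) with hf
  have hfalse : ∀ k : Fin n, ν {ω | Y k ω = false} = 1 - η := by
    intro k
    have hc : {ω | Y k ω = false} = {ω | Y k ω = true}ᶜ := by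
      ext ω; simp
    rw [hc, measure_compl (measurableSet_val Y hY k true) (measure_lt_top ν _).ne,
      hbern k, measure_univ]
  -- per-cylinder equality via independence
  have hpc : ∀ x : Fin n → Bool, (∀ j : Fin n, ¬ j.val < i.val → x j = false) →
      (1 - η) * ν {ω | ∀ j < i, Y j ω = x j}
        ≤ ν ({ω | ∀ j < i, Y j ω = x j} ∩ {ω | Y i ω = false}) := by
    intro x _
    set S : Finset (Fin n) := univ.filter (fun j => j < i) with hS
    have hiS : i ∉ S := by simp [hS]
    have hCyl : {ω | ∀ j < i, Y j ω = x j} = ⋂ j ∈ S, Y j ⁻¹' {x j} := by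
      ext ω; simp [hS, Set.mem_iInter]
    have h1 : ν {ω | ∀ j < i, Y j ω = x j} = ∏ j ∈ S, ν (Y j ⁻¹' {x j}) := by
      rw [hCyl]
      exact hindep.measure_inter_preimage_eq_mul (sets := fun j => {x j}) S
        (fun j _ => (Set.to_countable _).measurableSet)
    set sets : Fin n → Set Bool := fun j => if j = i then {false} else {x j} with hsets
    have h2 : ν ({ω | ∀ j < i, Y j ω = x j} ∩ {ω | Y i ω = false})
        = ∏ j ∈ insert i S, ν (Y j ⁻¹' sets j) := by
      have heq : {ω | ∀ j < i, Y j ω = x j} ∩ {ω | Y i ω = false}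
          = ⋂ j ∈ insert i S, Y j ⁻¹' sets j := by
        rw [Finset.set_biInter_insert, Set.inter_comm]
        congr 1
        · ext ω; simp [hsets]
        · rw [hCyl]
          apply Set.iInter₂_congr
          intro j hj
          have hji : j ≠ i := fun h => hiS (h ▸ hj)
          simp [hsets, hji]
      rw [heq]
      exact hindep.measure_inter_preimage_eq_mul (sets := sets) (insert i S)
        (fun j _ => (Set.to_countable _).measurableSet)
    rw [h1, h2, Finset.prod_insert hiS]
    have h3 : ∀ j ∈ S, ν (Y j ⁻¹' sets j) = ν (Y j ⁻¹' {x j}) := by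
      intro j hj
      have hji : j ≠ i := fun h => hiS (h ▸ hj)
      simp [hsets, hji]
    rw [Finset.prod_congr rfl h3]
    have h4 : ν (Y i ⁻¹' sets i) = 1 - η := by
      have : Y i ⁻¹' sets i = {ω | Y i ω = false} := by
        ext ω; simp [hsets]
      rw [this, hfalse i]
    rw [h4]
  have key := cyl_bound ν Y hY i false (1 - η) hpc {x | (cnt x : ℤ) = b}
  have hFmeas : MeasurableSet (Fset Y i.val b) := measurableSet_cylpre Y hY i.val _
  have hE : ν (Eset Y (i.val + 1) b) = v + ν (Fset Y i.val b ∩ {ω | Y i ω = false}) := by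
    rw [Eset_succ Y i b]
    exact measure_union (Eset_succ_disj Y i b)
      (hFmeas.inter (measurableSet_val Y hY i false))
  have hEb : ν (Eset Y i.val b) = v + f := measure_Eset_split ν Y hY i.val b
  rw [hE, hEb]
  calc η * v + (1 - η) * (v + f) = v + (1 - η) * f := by
        rw [mul_add, ← add_assoc]
        congr 1
        rw [← add_mul, add_comm η, tsub_add_cancel_of_le hη1, one_mul]
    _ ≤ v + ν (Fset Y i.val b ∩ {ω | Y i ω = false}) := add_le_add_right key v

end Stmt11Aux

open Stmt11Aux

/-- Stochastic dominance: if each `Xᵢ` succeeds with conditional probability at least `η`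
given any history, and `Y₁,…,Y_n` are independent Bernoulli(η), then
`P(∑ Xᵢ ≤ b) ≤ P(∑ Yᵢ ≤ b)`. -/
theorem stmt_11 {Ω Ω' : Type*} [MeasurableSpace Ω] [MeasurableSpace Ω']
    (μ : Measure Ω) (ν : Measure Ω')
    [IsProbabilityMeasure μ] [IsProbabilityMeasure ν]
    (n : ℕ) (η : ℝ≥0∞) (hη : 0 < η)
    (X : Fin n → Ω → Bool) (hX : ∀ i, Measurable (X i))
    (hcond : ∀ (i : Fin n) (x : Fin n → Bool),
      0 < μ {ω | ∀ j < i, X j ω = x j} →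
      η * μ {ω | ∀ j < i, X j ω = x j} ≤ μ {ω | X i ω = true ∧ ∀ j < i, X j ω = x j})
    (Y : Fin n → Ω' → Bool) (hY : ∀ i, Measurable (Y i))
    (hindep : iIndepFun Y ν)
    (hbern : ∀ i, ν {ω | Y i ω = true} = η)
    (b : ℤ) :
    μ {ω | ((Finset.univ.filter fun i => X i ω = true).card : ℤ) ≤ b} ≤
      ν {ω | ((Finset.univ.filter fun i => Y i ω = true).card : ℤ) ≤ b} := by
  classical
  have hgoalX : {ω | ((Finset.univ.filter fun i => X i ω = true).card : ℤ) ≤ b}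
      = Eset X n b := by
    ext ω
    simp only [Eset, Set.mem_preimage, Set.mem_setOf_eq, cnt, pat]
    have : (Finset.univ.filter fun i : Fin n =>
        (if (i : ℕ) < n then X i ω else false) = true)
        = Finset.univ.filter fun i => X i ω = true := by
      apply Finset.filter_congr
      intro i _
      simp [i.isLt]
    rw [← this]; exact Iff.rfl
  have hgoalY : {ω | ((Finset.univ.filter fun i => Y i ω = true).card : ℤ) ≤ b}
      = Eset Y n b := by
    ext ω
    simp only [Eset, Set.mem_preimage, Set.mem_setOf_eq, cnt, pat]
    have : (Finset.univ.filter fun i : Fin n =>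
        (if (i : ℕ) < n then Y i ω else false) = true)
        = Finset.univ.filter fun i => Y i ω = true := by
      apply Finset.filter_congr
      intro i _
      simp [i.isLt]
    rw [← this]; exact Iff.rfl
  rw [hgoalX, hgoalY]
  rcases Nat.eq_zero_or_pos n with hn | hn
  · subst hn
    rw [Eset_zero, Eset_zero]
    by_cases hb : (0 : ℤ) ≤ b
    · simp [hb]
    · simp [hb]
  · have hη1 : η ≤ 1 := by
      rw [← hbern ⟨0, hn⟩]
      exact prob_le_one
    -- main induction
    have main : ∀ m : ℕ, m ≤ n → ∀ b : ℤ, μ (Eset X m b) ≤ ν (Eset Y m b) := by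
      intro m
      induction m with
      | zero =>
        intro _ b
        rw [Eset_zero, Eset_zero]
        by_cases hb : (0 : ℤ) ≤ b
        · simp [hb]
        · simp [hb]
      | succ m ih =>
        intro hm b
        set i : Fin n := ⟨m, hm⟩ with hi
        have him : i.val = m := rfl
        have hmn : m ≤ n := Nat.le_of_succ_le hm
        calc μ (Eset X (m + 1) b) = μ (Eset X (i.val + 1) b) := by rw [him]
          _ ≤ η * μ (Eset X i.val (b - 1)) + (1 - η) * μ (Eset X i.val b) :=
              mu_step μ η hη1 X hX hcond i b
          _ ≤ η * ν (Eset Y i.val (b - 1)) + (1 - η) * ν (Eset Y i.val b) := by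
              rw [him]
              exact add_le_add (mul_le_mul_right (ih hmn (b - 1)) η)
                (mul_le_mul_right (ih hmn b) (1 - η))
          _ ≤ ν (Eset Y (i.val + 1) b) := nu_step ν η hη1 Y hY hindep hbern i b
          _ = ν (Eset Y (m + 1) b) := by rw [him]
    exact main n le_rfl b
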